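/- Let f : ℝ → ℝ be twice continuously differentiable with s·f(s) ≥ 0 for all s ∈ ℝ. Then for every R > 0 and M > 0 there exists a constant C > 0 (depending only on f, R, M) such that for all u, w, p ∈ ℝ with |u| ≤ R and |p| ≤ M one has ( f(u) + f'(u)·w − f(u+w) )·p ≤ C·w² + M·w·( f(u+w) − f(u) ). -/

import Mathlib

open Set

/-- Mean value: bounded derivative on a convex set gives a Lipschitz bound. -/
lemma lip_aux {g : ℝ → ℝ} (hg : Differentiable ℝ g) {s : Set ℝ} (hs : Convex ℝ s)
    {L : ℝ} (hL : ∀ x ∈ s, |deriv g x| ≤ L) {x y : ℝ} (hx : x ∈ s) (hy : y ∈ s) :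
    |g y - g x| ≤ L * |y - x| := by
  have := hs.norm_image_sub_le_of_norm_deriv_le (f := g) (fun z _ => hg z)
    (fun z hz => by rw [Real.norm_eq_abs]; exact hL z hz) hx hy
  simpa [Real.norm_eq_abs] using this

set_option maxHeartbeats 1000000 in
/-- pointwise form of Lemma 2.6. If `f` is `C²` with `s · f s ≥ 0` for all
`s`, then for every `R > 0` and `M > 0` there is `C > 0` such that for all `u, w, p` with
`|u| ≤ R` and `|p| ≤ M` one has
`(f u + f' u · w - f (u + w)) · p ≤ C w² + M · w · (f (u + w) - f u)`. -/
theorem statement7 (f : ℝ → ℝ) (hf : ContDiff ℝ 2 f) (hsign : ∀ s : ℝ, s * f s ≥ 0) :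
    ∀ R M : ℝ, 0 < R → 0 < M → ∃ C : ℝ, 0 < C ∧ ∀ u w p : ℝ, |u| ≤ R → |p| ≤ M →
      (f u + deriv f u * w - f (u + w)) * p
        ≤ C * w ^ 2 + M * (w * (f (u + w) - f u)) := by
  intro R M hR hM
  have hfd : Differentiable ℝ f := hf.differentiable (by norm_num)
  have h1 : ContDiff ℝ 1 (deriv f) := by
    have h2 : ContDiff ℝ (1 + 1) f := by
      convert hf using 2 <;> norm_num
    exact (contDiff_succ_iff_deriv.mp h2).2.2
  have hf'd : Differentiable ℝ (deriv f) := h1.differentiable one_ne_zero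
  have hf''c : Continuous (deriv (deriv f)) := (contDiff_one_iff_deriv.mp h1).2
  obtain ⟨K0, hK0⟩ := (isCompact_Icc (a := -(2*R+1)) (b := 2*R+1)).exists_bound_of_continuousOn
    hf''c.continuousOn
  obtain ⟨A0, hA0⟩ := (isCompact_Icc (a := -(2*R+1)) (b := 2*R+1)).exists_bound_of_continuousOn
    hf'd.continuous.continuousOn
  obtain ⟨B0, hB0⟩ := (isCompact_Icc (a := -(2*R+1)) (b := 2*R+1)).exists_bound_of_continuousOn
    hfd.continuous.continuousOn
  set K := max K0 0 with hKdef
  set A := max A0 0 with hAdef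
  set B := max B0 0 with hBdef
  have hK : 0 ≤ K := le_max_right _ _
  have hA : 0 ≤ A := le_max_right _ _
  have hB : 0 ≤ B := le_max_right _ _
  have hK' : ∀ x ∈ Icc (-(2*R+1)) (2*R+1), |deriv (deriv f) x| ≤ K := fun x hx =>
    le_trans (by simpa [Real.norm_eq_abs] using hK0 x hx) (le_max_left _ _)
  have hA' : ∀ x ∈ Icc (-(2*R+1)) (2*R+1), |deriv f x| ≤ A := fun x hx =>
    le_trans (by simpa [Real.norm_eq_abs] using hA0 x hx) (le_max_left _ _)
  have hB' : ∀ x ∈ Icc (-(2*R+1)) (2*R+1), |f x| ≤ B := fun x hx =>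
    le_trans (by simpa [Real.norm_eq_abs] using hB0 x hx) (le_max_left _ _)
  refine ⟨M * (K + 2*A + 2*B) + 1, by nlinarith, ?_⟩
  intro u w p hu hp
  have huI : u ∈ Icc (-(2*R+1)) (2*R+1) := by
    have := abs_le.mp hu; constructor <;> [linarith; linarith]
  by_cases hw : |w| ≤ R + 1
  · -- small w : Taylor via Lipschitz derivative
    have hwabs := abs_le.mp hw
    have huabs := abs_le.mp hu
    have hsub : Icc (u - |w|) (u + |w|) ⊆ Icc (-(2*R+1)) (2*R+1) := by
      intro x hx
      simp only [mem_Icc] at hx ⊢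
      have h0 : 0 ≤ |w| := abs_nonneg w
      constructor <;> nlinarith
    have hmemu : u ∈ Icc (u - |w|) (u + |w|) := by
      simp [abs_nonneg w]
    have hmemuw : u + w ∈ Icc (u - |w|) (u + |w|) := by
      have := abs_le.mp (le_refl |w|)
      constructor <;> nlinarith [neg_abs_le w, le_abs_self w]
    -- deriv of g := f - (deriv f u) • id
    set g : ℝ → ℝ := fun s => f s - deriv f u * s with hgdef
    have hg : Differentiable ℝ g := hfd.sub (differentiable_id.const_mul _)
    have hgd : ∀ x : ℝ, deriv g x = deriv f x - deriv f u := by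
      intro x
      have : HasDerivAt g (deriv f x - deriv f u * 1) x :=
        ((hfd x).hasDerivAt).sub ((hasDerivAt_id x).const_mul _)
      simpa using this.deriv
    have hbound : ∀ x ∈ Icc (u - |w|) (u + |w|), |deriv g x| ≤ K * |w| := by
      intro x hx
      rw [hgd x]
      have := lip_aux hf'd (convex_Icc _ _) hK' huI (hsub hx)
      calc |deriv f x - deriv f u| ≤ K * |x - u| := this
        _ ≤ K * |w| := by
            have hx' := hx
            simp only [mem_Icc] at hx'
            have : |x - u| ≤ |w| := abs_le.mpr ⟨by linarith [hx'.1], by linarith [hx'.2]⟩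
            exact mul_le_mul_of_nonneg_left this hK
    have hE : |f u + deriv f u * w - f (u + w)| ≤ K * w ^ 2 := by
      have := lip_aux hg (convex_Icc _ _) hbound hmemu hmemuw
      have h2 : g (u + w) - g u = f (u + w) - f u - deriv f u * w := by
        simp only [hgdef]; ring
      rw [h2] at this
      calc |f u + deriv f u * w - f (u + w)|
          = |f (u + w) - f u - deriv f u * w| := by rw [abs_sub_comm]; ring_nf
        _ ≤ K * |w| * |u + w - u| := this
        _ = K * w ^ 2 := by
            rw [show u + w - u = w from by ring, mul_assoc, abs_mul_abs_self, sq]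
    have hΔ : |f (u + w) - f u| ≤ A * |w| := by
      have := lip_aux hfd (convex_Icc _ _) hA' huI (hsub hmemuw)
      simpa [show u + w - u = w by ring] using this
    -- combine
    have h1' : (f u + deriv f u * w - f (u + w)) * p ≤ M * (K * w ^ 2) := by
      calc (f u + deriv f u * w - f (u + w)) * p ≤ |(f u + deriv f u * w - f (u + w)) * p| :=
            le_abs_self _
        _ = |f u + deriv f u * w - f (u + w)| * |p| := abs_mul _ _
        _ ≤ (K * w ^ 2) * M := mul_le_mul hE hp (abs_nonneg _) (mul_nonneg hK (sq_nonneg w))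
        _ = M * (K * w ^ 2) := by ring
    have h2' : -(M * (A * w ^ 2)) ≤ M * (w * (f (u + w) - f u)) := by
      have h3 : |w * (f (u + w) - f u)| ≤ A * w ^ 2 := by
        calc |w * (f (u + w) - f u)| = |w| * |f (u + w) - f u| := abs_mul _ _
          _ ≤ |w| * (A * |w|) := mul_le_mul_of_nonneg_left hΔ (abs_nonneg _)
          _ = A * (|w| * |w|) := by ring
          _ = A * w ^ 2 := by rw [abs_mul_abs_self, sq]
      have h4 := neg_abs_le (w * (f (u + w) - f u))
      nlinarith
    nlinarith [sq_nonneg w, mul_nonneg (mul_nonneg hM.le hA) (sq_nonneg w),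
      mul_nonneg (mul_nonneg hM.le hB) (sq_nonneg w)]
  · -- large w
    push_neg at hw
    have hw1 : (1 : ℝ) ≤ |w| := by linarith
    have hw2 : (1 : ℝ) ≤ w ^ 2 := by nlinarith [sq_abs w]
    have hwle : |w| ≤ w ^ 2 := by nlinarith [sq_abs w, abs_nonneg w]
    have huabs := abs_le.mp hu
    have hwf : 0 ≤ w * f (u + w) := by
      rcases lt_trichotomy w 0 with hneg | hzero | hpos
      · have : u + w < 0 := by
          have : w < -(R + 1) := by
            rcases abs_cases w with ⟨h, _⟩ | ⟨h, _⟩ <;> linarith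
          linarith
        have hs := hsign (u + w)
        have hfle : f (u + w) ≤ 0 := by nlinarith
        nlinarith
      · exfalso; rw [hzero] at hw1; simp at hw1; linarith
      · have : 0 < u + w := by
          have : R + 1 < w := by
            rcases abs_cases w with ⟨h, _⟩ | ⟨h, _⟩ <;> linarith
          linarith
        have hs := hsign (u + w)
        have hfge : 0 ≤ f (u + w) := by nlinarith
        exact mul_nonneg hpos.le hfge
    have hfabs : |f (u + w)| ≤ w * f (u + w) := by
      have h5 : |f (u + w)| * |w| = w * f (u + w) := by
        rw [mul_comm, ← abs_mul, abs_of_nonneg hwf]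
      nlinarith [abs_nonneg (f (u + w))]
    have h3 : -(f (u + w) * p) ≤ M * (w * f (u + w)) := by
      calc -(f (u + w) * p) ≤ |f (u + w) * p| := neg_le_abs _
        _ = |f (u + w)| * |p| := abs_mul _ _
        _ ≤ (w * f (u + w)) * M := mul_le_mul hfabs hp (abs_nonneg _) (le_trans (abs_nonneg _) hfabs)
        _ = M * (w * f (u + w)) := by ring
    have hfu : |f u| ≤ B := hB' u huI
    have hf'u : |deriv f u| ≤ A := hA' u huI
    have e1 : f u * p ≤ M * B * w ^ 2 := by
      calc f u * p ≤ |f u * p| := le_abs_self _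
        _ = |f u| * |p| := abs_mul _ _
        _ ≤ B * M := mul_le_mul hfu hp (abs_nonneg _) hB
        _ ≤ B * M * w ^ 2 := le_mul_of_one_le_right (mul_nonneg hB hM.le) hw2
        _ = M * B * w ^ 2 := by ring
    have e2 : deriv f u * w * p ≤ M * A * w ^ 2 := by
      calc deriv f u * w * p ≤ |deriv f u * w * p| := le_abs_self _
        _ = |deriv f u| * |w| * |p| := by rw [abs_mul, abs_mul]
        _ ≤ A * w ^ 2 * M := by
            apply mul_le_mul _ hp (abs_nonneg _) (mul_nonneg hA (sq_nonneg w))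
            exact mul_le_mul hf'u hwle (abs_nonneg _) hA
        _ = M * A * w ^ 2 := by ring
    have e3 : |M * (w * f u)| ≤ M * B * w ^ 2 := by
        rw [abs_mul, abs_mul, abs_of_nonneg hM.le]
        calc M * (|w| * |f u|) ≤ M * (w ^ 2 * B) := by
              apply mul_le_mul_of_nonneg_left _ hM.le
              exact mul_le_mul hwle hfu (abs_nonneg _) (sq_nonneg w)
          _ = M * B * w ^ 2 := by ring
    have expand : (f u + deriv f u * w - f (u + w)) * p
        = f u * p + deriv f u * w * p + -(f (u + w) * p) := by ring
    have expand2 : M * (w * (f (u + w) - f u)) = M * (w * f (u + w)) + -(M * (w * f u)) := by ring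
    rw [expand, expand2]
    have hCexp : (M * (K + 2*A + 2*B) + 1) * w ^ 2
        = M * K * w ^ 2 + 2 * (M * A * w ^ 2) + 2 * (M * B * w ^ 2) + w ^ 2 := by ring
    rw [hCexp]
    have hKw : 0 ≤ M * K * w ^ 2 := mul_nonneg (mul_nonneg hM.le hK) (sq_nonneg w)
    linarith [e1, e2, h3, e3, sq_nonneg w, le_abs_self (M * (w * f u)),
      mul_nonneg (mul_nonneg hM.le hA) (sq_nonneg w),
      mul_nonneg (mul_nonneg hM.le hB) (sq_nonneg w)]
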